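/- Let q ≥ 2 be real, let κ ≥ 1 be an integer, let η ∈ {0, 1}, and let α_1, …, α_κ ∈ ℂ with |α_j| = 1 for all j. Define F(s) = (log q)·( η·q^{−s}/(1 − q^{−s}) − κ + Σ_{j=1}^κ 1/(1 − α_j·q^{1/2−s}) ) for complex s that is not a pole. Then for every integer X ≥ 1, every t ∈ ℝ and all real σ ≥ σ0 > 1/2: Σ_{j=1}^κ | (α_j·q^{1/2−σ−it})^X·(1 − (α_j·q^{1/2−σ−it})^X)² / (1 − α_j^{−1}·q^{σ−1/2+it})³ | ≤ (4·q^{X(1/2−σ)} / ((σ0 − 1/2)²·log³ q)) · ( |Re F(σ0 + it)| + 3κ·log q ). -/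

import Mathlib

open scoped Classical BigOperators

noncomputable section

/-- `F(s) = (log q)·(η q^{-s}/(1-q^{-s}) - κ + Σ_j 1/(1 - α_j q^{1/2-s}))`, which is
`L'/L(s)` for `L(s) = (1-q^{-s})^η ∏_j (1 - α_j q^{1/2-s})`. -/
def Ffun (q : ℝ) (κ η : ℕ) (α : Fin κ → ℂ) (s : ℂ) : ℂ :=
  (Real.log q : ℂ) * ((η : ℂ) * (q : ℂ) ^ (-s) / (1 - (q : ℂ) ^ (-s)) - (κ : ℂ)
    + ∑ j, 1 / (1 - α j * (q : ℂ) ^ ((1 : ℂ) / 2 - s)))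

lemma aux_re_inv (v : ℂ) (hv : ‖v‖ < 1) :
    (1 - ‖v‖) / (‖1 - v‖) ^ 2 ≤ ((1:ℂ)/(1-v)).re := by
  have hne : (1:ℂ) - v ≠ 0 := by
    intro h
    have hv1 : v = 1 := by linear_combination -h
    rw [hv1] at hv; simp at hv
  have hpos : 0 < ‖1 - v‖ := by
    simpa [norm_pos_iff] using hne
  rw [one_div, Complex.inv_re, Complex.sub_re, Complex.one_re, ← Complex.sq_norm]
  exact div_le_div_of_nonneg_right (by linarith [Complex.re_le_norm v]) (by positivity)

lemma aux_re_inv_nonneg (v : ℂ) (hv : ‖v‖ < 1) :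
    0 ≤ ((1:ℂ)/(1-v)).re := by
  refine le_trans ?_ (aux_re_inv v hv)
  have h : 0 ≤ 1 - ‖v‖ := by linarith
  positivity

lemma aux_sq (w : ℂ) (d : ℝ) (hd0 : 0 ≤ d) (hd1 : d ≤ 1) (hw : ‖w‖ ≤ 1) :
    d * ‖1 - w‖ ^ 2 ≤ ‖1 - w * (d:ℂ)‖ ^ 2 := by
  have hw2 : w.re ^ 2 + w.im ^ 2 ≤ 1 := by
    have h := Complex.sq_norm w
    rw [Complex.normSq_apply] at h
    nlinarith [norm_nonneg w]
  rw [Complex.sq_norm, Complex.sq_norm]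
  simp only [Complex.normSq_apply, Complex.sub_re, Complex.sub_im, Complex.one_re,
    Complex.one_im, Complex.mul_re, Complex.mul_im, Complex.ofReal_re, Complex.ofReal_im]
  nlinarith [sq_nonneg w.im, sq_nonneg w.re, sq_nonneg (1-d), mul_nonneg hd0 (sq_nonneg w.im)]

set_option maxHeartbeats 2000000 in
/-- bound for the sum over zeros appearing in the Dirichlet polynomial
approximation of `L'/L`. -/
theorem statement11 (q : ℝ) (hq : 2 ≤ q) (κ : ℕ) (hκ : 1 ≤ κ) (η : ℕ) (hη : η = 0 ∨ η = 1)
    (α : Fin κ → ℂ) (hα : ∀ j, ‖α j‖ = 1)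
    (X : ℕ) (hX : 1 ≤ X) (t : ℝ) (σ σ0 : ℝ) (h1 : σ0 ≤ σ) (h2 : 1 / 2 < σ0) :
    ∑ j, ‖(α j * (q : ℂ) ^ ((1 : ℂ) / 2 - (σ : ℂ) - (t : ℂ) * Complex.I)) ^ X
          * (1 - (α j * (q : ℂ) ^ ((1 : ℂ) / 2 - (σ : ℂ) - (t : ℂ) * Complex.I)) ^ X) ^ 2
          / (1 - (α j)⁻¹ * (q : ℂ) ^ ((σ : ℂ) - (1 : ℂ) / 2 + (t : ℂ) * Complex.I)) ^ 3‖
      ≤ 4 * q ^ ((X : ℝ) * (1 / 2 - σ)) / ((σ0 - 1 / 2) ^ 2 * Real.log q ^ 3)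
          * (|(Ffun q κ η α ((σ0 : ℂ) + (t : ℂ) * Complex.I)).re| + 3 * (κ : ℝ) * Real.log q) := by
  have hq0 : (0:ℝ) < q := by linarith
  have hq1 : (1:ℝ) < q := by linarith
  have hqC : (q:ℂ) ≠ 0 := by exact_mod_cast hq0.ne'
  have hL : 0 < Real.log q := Real.log_pos hq1
  set L := Real.log q with hLdef
  set a := σ0 - 1/2 with hadef
  have ha : 0 < a := by rw [hadef]; linarith
  set e : ℂ := (1:ℂ)/2 - (σ:ℂ) - (t:ℂ)*Complex.I with hedef
  set e0 : ℂ := (1:ℂ)/2 - (σ0:ℂ) - (t:ℂ)*Complex.I with he0def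
  set ρ : ℝ := q ^ (1/2 - σ : ℝ) with hρdef
  set ρ0 : ℝ := q ^ (1/2 - σ0 : ℝ) with hρ0def
  set d : ℝ := q ^ (σ0 - σ : ℝ) with hddef
  have hρpos : 0 < ρ := Real.rpow_pos_of_pos hq0 _
  have hρ0pos : 0 < ρ0 := Real.rpow_pos_of_pos hq0 _
  have hdpos : 0 < d := Real.rpow_pos_of_pos hq0 _
  have hρ0lt1 : ρ0 < 1 := Real.rpow_lt_one_of_one_lt_of_neg hq1 (by linarith)
  have hρleρ0 : ρ ≤ ρ0 := Real.rpow_le_rpow_of_exponent_le hq1.le (by linarith)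
  have hρle1 : ρ ≤ 1 := hρleρ0.trans hρ0lt1.le
  have hdle1 : d ≤ 1 := Real.rpow_le_one_of_one_le_of_nonpos hq1.le (by linarith)
  have habs_qe : ‖(q:ℂ) ^ e‖ = ρ := by
    rw [Complex.norm_cpow_eq_rpow_re_of_pos hq0, hρdef]
    congr 1
    rw [hedef]
    simp
  have habs_qe0 : ‖(q:ℂ) ^ e0‖ = ρ0 := by
    rw [Complex.norm_cpow_eq_rpow_re_of_pos hq0, hρ0def]
    congr 1
    rw [he0def]
    simp
  set z : Fin κ → ℂ := fun j => α j * (q:ℂ) ^ e with hzdef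
  set w : Fin κ → ℂ := fun j => α j * (q:ℂ) ^ e0 with hwdef
  have habs_z : ∀ j, ‖z j‖ = ρ := by
    intro j; rw [hzdef]; simp only [norm_mul, hα j, habs_qe, one_mul]
  have habs_w : ∀ j, ‖w j‖ = ρ0 := by
    intro j; rw [hwdef]; simp only [norm_mul, hα j, habs_qe0, one_mul]
  have hzne : ∀ j, z j ≠ 0 := by
    intro j h
    have h2 := habs_z j
    rw [h] at h2; simp at h2; exact absurd h2.symm hρpos.ne'
  -- relation z = w * d
  have hzw : ∀ j, z j = w j * ((d:ℝ):ℂ) := by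
    intro j
    have h1' : e = e0 + ((σ0 - σ : ℝ) : ℂ) := by
      rw [hedef, he0def]; push_cast; ring
    show α j * (q:ℂ) ^ e = α j * (q:ℂ) ^ e0 * ((d:ℝ):ℂ)
    rw [h1', Complex.cpow_add _ _ hqC, hddef, Complex.ofReal_cpow hq0.le]
    push_cast
    ring
  -- denominator rewriting
  have hden : ∀ j, (1:ℂ) - (α j)⁻¹ * (q:ℂ) ^ ((σ:ℂ) - (1:ℂ)/2 + (t:ℂ)*Complex.I)
      = (z j - 1) / z j := by
    intro j
    have hαne : α j ≠ 0 := by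
      intro h; have h' := hα j; rw [h] at h'; simp at h'
    have hqene : (q:ℂ) ^ e ≠ 0 := by
      intro h
      have h2 := habs_qe; rw [h] at h2; simp at h2; exact absurd h2.symm hρpos.ne'
    have hexp : ((σ:ℂ) - (1:ℂ)/2 + (t:ℂ)*Complex.I) = -e := by rw [hedef]; ring
    rw [hexp, Complex.cpow_neg, eq_div_iff (hzne j)]
    show (1 - (α j)⁻¹ * ((q:ℂ)^e)⁻¹) * (α j * (q:ℂ)^e) = α j * (q:ℂ)^e - 1
    field_simp
  -- real parts at σ0
  set R : Fin κ → ℝ := fun j => ((1:ℂ)/(1 - w j)).re with hRdef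
  have hRnn : ∀ j, 0 ≤ R j := by
    intro j; exact aux_re_inv_nonneg _ (by rw [habs_w j]; exact hρ0lt1)
  have hRlb : ∀ j, (1 - ρ0) / (‖1 - w j‖) ^ 2 ≤ R j := by
    intro j
    have h := aux_re_inv (w j) (by rw [habs_w j]; exact hρ0lt1)
    rwa [habs_w j] at h
  clear_value R z w e e0 ρ ρ0 d a L
  -- key exponential inequality
  have hexpkey : ρ0 ^ 3 * (a * L) ^ 2 ≤ (1 - ρ0) ^ 2 := by
    have hρ0eq : ρ0 = Real.exp (-(a*L)) := by
      rw [hρ0def, Real.rpow_def_of_pos hq0]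
      congr 1; rw [hadef, hLdef]; ring
    set y := a * L with hydef
    have hy : 0 < y := mul_pos ha hL
    have h1ρ0 : 1 - ρ0 = Real.exp (-y) * (Real.exp y - 1) := by
      rw [hρ0eq, mul_sub, ← Real.exp_add]
      simp
    have h3 : ρ0 ^ 3 = Real.exp (-y) ^ 3 := by rw [hρ0eq]
    rw [h1ρ0, h3]
    have hA : Real.exp (-y) ^ 3 ≤ Real.exp (-y) ^ 2 := by
      apply pow_le_pow_of_le_one (Real.exp_pos _).le _ (by norm_num)
      rw [Real.exp_le_one_iff]; linarith
    have hB' : y ^ 2 ≤ (Real.exp y - 1) ^ 2 := by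
      have := Real.add_one_le_exp y
      nlinarith
    calc Real.exp (-y) ^ 3 * y ^ 2 ≤ Real.exp (-y) ^ 2 * (Real.exp y - 1) ^ 2 := by
          apply mul_le_mul hA hB' (by positivity) (by positivity)
      _ = (Real.exp (-y) * (Real.exp y - 1)) ^ 2 := by ring
  -- lower bound for 1 - z j
  have hC : ∀ j, 1 - ρ0 ≤ ‖1 - z j‖ := by
    intro j
    have h := norm_sub_norm_le 1 (z j)
    rw [norm_one, habs_z j] at h
    linarith
  have hCpos : ∀ j, 0 < ‖1 - z j‖ := fun j => lt_of_lt_of_le (by linarith) (hC j)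
  have hCsq : ∀ j, d * ‖1 - w j‖^2 ≤ ‖1 - z j‖^2 := by
    intro j
    rw [hzw j]
    exact aux_sq (w j) d hdpos.le hdle1 (by rw [habs_w j]; exact hρ0lt1.le)
  have hWpos : ∀ j, 0 < ‖1 - w j‖ := by
    intro j
    have h := norm_sub_norm_le 1 (w j)
    rw [norm_one, habs_w j] at h
    linarith
  have hB : ∀ j, ‖1 - (z j)^X‖ ≤ 2 := by
    intro j
    have h := norm_add_le 1 (-(z j)^X)
    rw [norm_one, norm_neg, norm_pow, habs_z j] at h
    have hp : ρ ^ X ≤ 1 := pow_le_one₀ hρpos.le hρle1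
    calc ‖1 - (z j)^X‖ = ‖1 + -(z j)^X‖ := by ring_nf
      _ ≤ 1 + ρ ^ X := h
      _ ≤ 2 := by linarith
  have hρ3 : ρ^3 ≤ ρ0^3 * d := by
    have e1 : ρ^(3:ℕ) = q ^ ((1/2 - σ)*3 : ℝ) := by
      rw [hρdef, ← Real.rpow_natCast (q ^ ((1:ℝ)/2 - σ)) 3, ← Real.rpow_mul hq0.le]
      norm_num
    have e2 : ρ0^(3:ℕ) * d = q ^ ((1/2 - σ0)*3 + (σ0 - σ) : ℝ) := by
      rw [hρ0def, hddef, ← Real.rpow_natCast (q ^ ((1:ℝ)/2 - σ0)) 3, ← Real.rpow_mul hq0.le,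
        ← Real.rpow_add hq0]
      norm_num
    rw [e1, e2]
    exact Real.rpow_le_rpow_of_exponent_le hq1.le (by linarith)
  -- term abs computation
  have habsterm : ∀ j, ‖(z j)^X * (1 - (z j)^X)^2
      / (1 - (α j)⁻¹ * (q:ℂ) ^ ((σ:ℂ) - (1:ℂ)/2 + (t:ℂ)*Complex.I))^3‖
      = ρ^X * ‖1 - (z j)^X‖^2 * ρ^3 / ‖1 - z j‖^3 := by
    intro j
    rw [hden j]
    rw [norm_div, norm_mul, norm_pow, norm_pow, norm_pow, norm_div, habs_z j]
    have hsub : ‖z j - 1‖ = ‖1 - z j‖ := by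
      rw [show z j - 1 = -(1 - z j) by ring, norm_neg]
    rw [hsub]
    rw [div_pow]
    rw [div_div_eq_mul_div]
  -- per-term bound
  have hterm : ∀ j, ρ^X * ‖1 - (z j)^X‖^2 * ρ^3 / ‖1 - z j‖^3
      ≤ (4 * ρ^X / (a^2 * L^2)) * R j := by
    intro j
    have hC0 : 0 < ‖1 - z j‖ := hCpos j
    have hW0 : 0 < ‖1 - w j‖ := hWpos j
    have hB0 : 0 ≤ ‖1 - (z j)^X‖ := norm_nonneg _
    have hB2 : ‖1 - (z j)^X‖^2 ≤ 4 := by nlinarith [hB j]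
    have hRW : 1 - ρ0 ≤ R j * ‖1 - w j‖^2 := by
      have h := hRlb j
      rw [div_le_iff₀ (pow_pos hW0 2)] at h
      linarith [h]
    have hC3 : (1 - ρ0) * (d * ‖1 - w j‖^2) ≤ ‖1 - z j‖^3 := by
      have h0 : (0:ℝ) ≤ 1 - ρ0 := by linarith
      have e1 : (1-ρ0) * (d * ‖1 - w j‖^2)
          ≤ (1-ρ0) * ‖1 - z j‖^2 := mul_le_mul_of_nonneg_left (hCsq j) h0
      have e2 : (1-ρ0) * ‖1 - z j‖^2
          ≤ ‖1 - z j‖ * ‖1 - z j‖^2 :=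
        mul_le_mul_of_nonneg_right (hC j) (sq_nonneg _)
      have e3 : ‖1 - z j‖ * ‖1 - z j‖^2
          = ‖1 - z j‖^3 := by ring
      linarith
    rw [div_le_iff₀ (pow_pos hC0 3), div_mul_eq_mul_div, div_mul_eq_mul_div,
      le_div_iff₀ (mul_pos (pow_pos ha 2) (pow_pos hL 2))]
    have s1 : ρ^X * ‖1 - (z j)^X‖^2 * ρ^3 * (a^2*L^2)
        ≤ ρ^X * (4 * (ρ0^3*d) * (a^2*L^2)) := by
      have hmm : ‖1 - (z j)^X‖^2 * ρ^3 ≤ 4 * (ρ0^3*d) :=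
        mul_le_mul hB2 hρ3 (pow_nonneg hρpos.le 3) (by norm_num)
      have h' := mul_le_mul_of_nonneg_right hmm (show (0:ℝ) ≤ a^2*L^2 by positivity)
      have h'' := mul_le_mul_of_nonneg_left h' (pow_nonneg hρpos.le X)
      calc ρ^X * ‖1 - (z j)^X‖^2 * ρ^3 * (a^2*L^2)
          = ρ^X * (‖1 - (z j)^X‖^2 * ρ^3 * (a^2*L^2)) := by ring
        _ ≤ ρ^X * (4 * (ρ0^3*d) * (a^2*L^2)) := h''
    have s2 : ρ^X * (4 * (ρ0^3*d) * (a^2*L^2)) ≤ 4 * ρ^X * d * (1-ρ0)^2 := by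
      have h' := mul_le_mul_of_nonneg_left hexpkey (by nlinarith [pow_nonneg hρpos.le X, hdpos] : (0:ℝ) ≤ 4 * ρ^X * d)
      calc ρ^X * (4 * (ρ0^3*d) * (a^2*L^2)) = 4 * ρ^X * d * (ρ0^3 * (a*L)^2) := by ring
        _ ≤ 4 * ρ^X * d * (1-ρ0)^2 := h'
    have s3 : 4 * ρ^X * d * (1-ρ0)^2 ≤ 4 * ρ^X * R j * ‖1 - z j‖^3 := by
      have h0 : (0:ℝ) ≤ 1 - ρ0 := by linarith
      have m1 : (1-ρ0) * (1-ρ0) ≤ (R j * ‖1 - w j‖^2) * (1-ρ0) :=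
        mul_le_mul_of_nonneg_right hRW h0
      have m2 : 4*ρ^X*d*((1-ρ0)*(1-ρ0))
          ≤ 4*ρ^X*d*((R j * ‖1 - w j‖^2)*(1-ρ0)) :=
        mul_le_mul_of_nonneg_left m1 (by nlinarith [pow_nonneg hρpos.le X, hdpos])
      have hRj : 0 ≤ R j := hRnn j
      have hfac : (0:ℝ) ≤ 4*ρ^X*(R j) := by nlinarith [pow_nonneg hρpos.le X, hRj]
      have m3 : 4*ρ^X*(R j)*((1-ρ0)*(d*‖1 - w j‖^2))
          ≤ 4*ρ^X*(R j)*‖1 - z j‖^3 :=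
        mul_le_mul_of_nonneg_left hC3 hfac
      calc 4 * ρ^X * d * (1-ρ0)^2 = 4*ρ^X*d*((1-ρ0)*(1-ρ0)) := by ring
        _ ≤ 4*ρ^X*d*((R j * ‖1 - w j‖^2)*(1-ρ0)) := m2
        _ = 4*ρ^X*(R j)*((1-ρ0)*(d*‖1 - w j‖^2)) := by ring
        _ ≤ 4*ρ^X*(R j)*‖1 - z j‖^3 := m3
        _ = 4 * ρ^X * R j * ‖1 - z j‖^3 := by ring
    linarith [s1, s2, s3]
  -- the value of Re F at σ0 + it
  set u : ℂ := (q:ℂ) ^ (-((σ0:ℂ) + (t:ℂ)*Complex.I)) with hudef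
  have habsu : ‖u‖ < 1 := by
    rw [hudef, Complex.norm_cpow_eq_rpow_re_of_pos hq0]
    have : (-((σ0:ℂ) + (t:ℂ)*Complex.I)).re = -σ0 := by simp
    rw [this]
    exact Real.rpow_lt_one_of_one_lt_of_neg hq1 (by linarith)
  have hune : (1:ℂ) - u ≠ 0 := by
    intro h
    have : u = 1 := by linear_combination -h
    rw [this] at habsu; simp at habsu
  have hure : -1 ≤ (u/(1-u)).re := by
    have heq : u/(1-u) = 1/(1-u) - 1 := by field_simp; ring
    rw [heq, Complex.sub_re, Complex.one_re]
    have := aux_re_inv_nonneg u habsu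
    linarith
  have hF : (Ffun q κ η α ((σ0:ℂ) + (t:ℂ)*Complex.I)).re
      = L * ((η:ℝ) * (u/(1-u)).re - (κ:ℝ) + ∑ j, R j) := by
    have hexp0 : (1:ℂ)/2 - ((σ0:ℂ) + (t:ℂ)*Complex.I) = e0 := by rw [he0def]; ring
    have hsum' : (∑ j, 1/(1 - α j * (q:ℂ) ^ ((1:ℂ)/2 - ((σ0:ℂ) + (t:ℂ)*Complex.I))))
        = ∑ j, (1:ℂ)/(1 - w j) := by
      rw [hexp0]; simp only [hwdef]
    show ((Real.log q : ℂ) * ((η:ℂ) * (q:ℂ) ^ (-((σ0:ℂ) + (t:ℂ)*Complex.I))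
        / (1 - (q:ℂ) ^ (-((σ0:ℂ) + (t:ℂ)*Complex.I))) - (κ:ℂ)
        + ∑ j, 1/(1 - α j * (q:ℂ) ^ ((1:ℂ)/2 - ((σ0:ℂ) + (t:ℂ)*Complex.I))))).re = _
    rw [hsum', ← hudef, ← hLdef]
    have h1' : ((η:ℂ) * u / (1-u) - (κ:ℂ) + ∑ j, (1:ℂ)/(1-w j)).re
        = (η:ℝ) * (u/(1-u)).re - (κ:ℝ) + ∑ j, R j := by
      rw [Complex.add_re, Complex.sub_re, Complex.natCast_re, mul_div_assoc,
        ← Complex.ofReal_natCast η, Complex.re_ofReal_mul, Complex.re_sum]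
      simp only [hRdef]
    rw [Complex.re_ofReal_mul, h1']
  have hηκ : (η:ℝ) ≤ (κ:ℝ) := by
    rcases hη with h | h
    · rw [h]; simp
    · rw [h]; exact_mod_cast hκ
  have hsum_ub : L * (∑ j, R j)
      ≤ |(Ffun q κ η α ((σ0:ℂ) + (t:ℂ)*Complex.I)).re| + 3 * (κ:ℝ) * L := by
    have hFexp : (Ffun q κ η α ((σ0:ℂ) + (t:ℂ)*Complex.I)).re
        = L * ((η:ℝ) * (u/(1-u)).re) - L * κ + L * (∑ j, R j) := by rw [hF]; ring
    have habsF := le_abs_self ((Ffun q κ η α ((σ0:ℂ) + (t:ℂ)*Complex.I)).re)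
    have h6 : -(L * (η:ℝ)) ≤ L * ((η:ℝ) * (u/(1-u)).re) := by
      have h0 : (0:ℝ) ≤ (η:ℝ) := by positivity
      have hm := mul_nonneg (mul_nonneg hL.le h0)
        (by linarith [hure] : (0:ℝ) ≤ (u/(1-u)).re + 1)
      nlinarith [hm]
    have h7 : L * (η:ℝ) ≤ L * (κ:ℝ) := mul_le_mul_of_nonneg_left hηκ hL.le
    have h8 : (0:ℝ) ≤ L * (κ:ℝ) := by positivity
    linarith [hFexp, habsF, h6, h7, h8]
  -- final assembly
  have hρX : ρ^X = q ^ ((X:ℝ) * (1/2 - σ)) := by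
    rw [hρdef, ← Real.rpow_natCast (q ^ ((1:ℝ)/2 - σ)) X, ← Real.rpow_mul hq0.le, mul_comm]
  have hKnn : 0 ≤ 4 * ρ^X / (a^2 * L^2) := by
    apply div_nonneg _ (by positivity)
    have := pow_nonneg hρpos.le X
    linarith
  simp only [hzdef] at habsterm hterm
  calc ∑ j, ‖(α j * (q:ℂ) ^ e)^X * (1 - (α j * (q:ℂ) ^ e)^X)^2
        / (1 - (α j)⁻¹ * (q:ℂ) ^ ((σ:ℂ) - (1:ℂ)/2 + (t:ℂ)*Complex.I))^3‖
      = ∑ j, ρ^X * ‖1 - (α j * (q:ℂ) ^ e)^X‖^2 * ρ^3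
          / ‖1 - α j * (q:ℂ) ^ e‖^3 :=
        Finset.sum_congr rfl (fun j _ => habsterm j)
    _ ≤ ∑ j, (4 * ρ^X / (a^2 * L^2)) * R j := Finset.sum_le_sum (fun j _ => hterm j)
    _ = (4 * ρ^X / (a^2 * L^2)) * ∑ j, R j := by rw [Finset.mul_sum]
    _ ≤ (4 * ρ^X / (a^2 * L^2))
        * ((|(Ffun q κ η α ((σ0:ℂ) + (t:ℂ)*Complex.I)).re| + 3 * (κ:ℝ) * L) / L) := by
        apply mul_le_mul_of_nonneg_left _ hKnn
        rw [le_div_iff₀ hL]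
        linarith [hsum_ub]
    _ = 4 * q ^ ((X:ℝ) * (1/2 - σ)) / (a^2 * L^3)
        * (|(Ffun q κ η α ((σ0:ℂ) + (t:ℂ)*Complex.I)).re| + 3 * (κ:ℝ) * L) := by
        rw [← hρX]
        field_simp


end
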